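/- Let n ≥ 3 and let f : ℝⁿ → ℂ be a Schwartz function. Then ∫_{ℝⁿ} |f(x)|²/‖x‖² dx ≤ (2/(n−2))² ∫_{ℝⁿ} ‖∇f(x)‖²_{ℂⁿ} dx. -/

import Mathlib

open MeasureTheory SchwartzMap

noncomputable section

/-- Partial derivative in the `i`-th coordinate direction. -/
def pd {n : ℕ} (f : EuclideanSpace ℝ (Fin n) → ℂ) (i : Fin n)
    (x : EuclideanSpace ℝ (Fin n)) : ℂ :=
  fderiv ℝ f x (EuclideanSpace.single i 1)


namespace HardyAux
variable {n : ℕ}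
local notation "E" => EuclideanSpace ℝ (Fin n)

lemma den_deriv (ε : ℝ) (x : E) :
    HasFDerivAt (fun y : E => ‖y‖^2 + ε) ((2:ℕ) • innerSL ℝ x) x :=
  ((hasStrictFDerivAt_norm_sq x).hasFDerivAt).add_const ε

lemma g_deriv (i : Fin n) {ε : ℝ} (hε : 0 < ε) (x : E) :
    HasFDerivAt (fun y : E => y i / (‖y‖^2 + ε))
      ((x i • ((-(((‖x‖^2+ε) ^ 2)⁻¹)) • ((2:ℕ) • innerSL ℝ x)) +
        ((‖x‖^2+ε)⁻¹) • (EuclideanSpace.proj i : E →L[ℝ] ℝ))) x := by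
  have hd : (0:ℝ) < ‖x‖^2 + ε := by positivity
  have hinv : HasFDerivAt (fun y : E => (‖y‖^2 + ε)⁻¹)
      ((-(((‖x‖^2+ε) ^ 2)⁻¹)) • ((2:ℕ) • innerSL ℝ x)) x :=
    (hasDerivAt_inv hd.ne').comp_hasFDerivAt x (den_deriv ε x)
  have hproj : HasFDerivAt (fun y : E => y i) (EuclideanSpace.proj i : E →L[ℝ] ℝ) x :=
    (EuclideanSpace.proj i : E →L[ℝ] ℝ).hasFDerivAt
  simp only [div_eq_mul_inv]
  exact hproj.mul hinv

lemma g_deriv_apply (i : Fin n) {ε : ℝ} (hε : 0 < ε) (x : E) :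
    fderiv ℝ (fun y : E => y i / (‖y‖^2 + ε)) x (EuclideanSpace.single i 1) =
      ((‖x‖^2+ε) - 2*(x i)^2)/(‖x‖^2+ε)^2 := by
  have hd : (0:ℝ) < ‖x‖^2 + ε := by positivity
  rw [(g_deriv i hε x).fderiv]
  have h1 : (innerSL ℝ x) (EuclideanSpace.single i (1:ℝ)) = x i := by
    simp [EuclideanSpace.inner_single_right]
  have h2 : (EuclideanSpace.proj i : E →L[ℝ] ℝ) (EuclideanSpace.single i (1:ℝ)) = 1 := by
    simp
  simp only [ContinuousLinearMap.add_apply, ContinuousLinearMap.smul_apply, h1, h2,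
    smul_eq_mul]
  field_simp
  ring

lemma F_deriv (f : SchwartzMap E ℂ) (x : E) :
    HasFDerivAt (fun y : E => ‖f y‖^2)
      ((2:ℕ) • (innerSL ℝ (f x)).comp (fderiv ℝ f x)) x :=
  (f.differentiableAt.hasFDerivAt).norm_sq

lemma F_deriv_apply (f : SchwartzMap E ℂ) (i : Fin n) (x : E) :
    fderiv ℝ (fun y : E => ‖f y‖^2) x (EuclideanSpace.single i 1) =
      2 * (inner ℝ (f x) (fderiv ℝ f x (EuclideanSpace.single i 1)) : ℝ) := by
  rw [(F_deriv f x).fderiv]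
  simp
  ring

lemma F_cont (f : SchwartzMap E ℂ) : Continuous (fun y : E => ‖f y‖^2) :=
  (f.continuous.norm).pow 2

lemma pd_eq (f : SchwartzMap E ℂ) (i : Fin n) (x : E) :
    LineDeriv.lineDerivOpCLM ℝ (SchwartzMap E ℂ) (EuclideanSpace.single i (1:ℝ)) f x = fderiv ℝ f x (EuclideanSpace.single i 1) := by
  simp [lineDerivOp_apply_eq_fderiv]

lemma pd_cont (f : SchwartzMap E ℂ) (i : Fin n) :
    Continuous (fun x : E => fderiv ℝ f x (EuclideanSpace.single i 1)) := by
  have := (LineDeriv.lineDerivOpCLM ℝ (SchwartzMap E ℂ) (EuclideanSpace.single i (1:ℝ)) f).continuous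
  exact this.congr fun x => pd_eq f i x

lemma f_bdd (f : SchwartzMap E ℂ) : ∃ C : ℝ, 0 ≤ C ∧ ∀ x, ‖f x‖ ≤ C := by
  obtain ⟨C, hC0, hC⟩ := f.decay 0 0
  exact ⟨C, hC0.le, fun x => by simpa using hC x⟩

/-- integrable × bounded (right) -/
lemma int_mul_bdd {g c : E → ℝ} (hg : Integrable g) (hc : AEStronglyMeasurable c)
    {C : ℝ} (h : ∀ x, |c x| ≤ C) : Integrable (fun x => g x * c x) := by
  simpa [mul_comm] using hg.bdd_mul (c := C) hc (Filter.Eventually.of_forall fun x => by simpa using h x)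

lemma F_integrable (f : SchwartzMap E ℂ) : Integrable (fun x : E => ‖f x‖^2) := by
  obtain ⟨C, -, hC⟩ := f_bdd f
  have := int_mul_bdd (g := fun x => ‖f x‖) (c := fun x => ‖f x‖)
    (f.integrable (μ := volume)).norm (f.continuous.norm.aestronglyMeasurable)
    (C := C) (fun x => by simpa [abs_of_nonneg (norm_nonneg _)] using hC x)
  simpa [sq] using this

lemma pd_schwartz_integrable (f : SchwartzMap E ℂ) (i : Fin n) :
    Integrable (fun x : E => ‖fderiv ℝ f x (EuclideanSpace.single i 1)‖) := by
  have := ((LineDeriv.lineDerivOpCLM ℝ (SchwartzMap E ℂ) (EuclideanSpace.single i (1:ℝ)) f).integrable (μ := volume)).norm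
  simpa [pd_eq, lineDerivOp_apply_eq_fderiv] using this

lemma pdsq_integrable (f : SchwartzMap E ℂ) (i : Fin n) :
    Integrable (fun x : E => ‖fderiv ℝ f x (EuclideanSpace.single i 1)‖^2) := by
  obtain ⟨C, -, hC⟩ := f_bdd (LineDeriv.lineDerivOpCLM ℝ (SchwartzMap E ℂ) (EuclideanSpace.single i (1:ℝ)) f)
  have := int_mul_bdd (pd_schwartz_integrable f i) ((pd_cont f i).norm.aestronglyMeasurable)
    (C := C) (fun x => by
      simpa [abs_of_nonneg (norm_nonneg _), pd_eq, lineDerivOp_apply_eq_fderiv] using hC x)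
  simpa [sq] using this

lemma normsq_eq (x : E) : ‖x‖^2 = ∑ i, (x i)^2 := by
  rw [EuclideanSpace.norm_eq, Real.sq_sqrt (by positivity)]
  simp [sq_abs]

lemma abs_coord (x : E) (i : Fin n) : |x i| ≤ ‖x‖ := by
  have h1 : (x i)^2 ≤ ‖x‖^2 := by
    rw [normsq_eq]
    exact Finset.single_le_sum (f := fun j => (x j)^2) (fun j _ => sq_nonneg _) (Finset.mem_univ i)
  calc |x i| = Real.sqrt ((x i)^2) := (Real.sqrt_sq_eq_abs _).symm
    _ ≤ Real.sqrt (‖x‖^2) := Real.sqrt_le_sqrt h1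
    _ = ‖x‖ := Real.sqrt_sq (norm_nonneg x)

lemma bound_g {ε : ℝ} (hε : 0 < ε) (x : E) (i : Fin n) :
    |x i / (‖x‖^2 + ε)| ≤ 1/(2*Real.sqrt ε) := by
  have hd : (0:ℝ) < ‖x‖^2 + ε := by positivity
  have hs : (0:ℝ) < Real.sqrt ε := Real.sqrt_pos.2 hε
  rw [abs_div, abs_of_pos hd, div_le_div_iff₀ hd (by positivity)]
  have h2 : Real.sqrt ε ^ 2 = ε := Real.sq_sqrt hε.le
  have h3 : |x i| ≤ ‖x‖ := abs_coord x i
  nlinarith [sq_nonneg (‖x‖ - Real.sqrt ε), norm_nonneg x, abs_nonneg (x i)]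

lemma bound_dg {ε : ℝ} (hε : 0 < ε) (x : E) (i : Fin n) :
    |((‖x‖^2+ε) - 2*(x i)^2)/(‖x‖^2+ε)^2| ≤ 3/ε := by
  have hd : (0:ℝ) < ‖x‖^2 + ε := by positivity
  have hsq : (x i)^2 ≤ ‖x‖^2 := by
    rw [normsq_eq]
    exact Finset.single_le_sum (f := fun j => (x j)^2) (fun j _ => sq_nonneg _) (Finset.mem_univ i)
  rw [abs_div, abs_of_pos (by positivity : (0:ℝ) < (‖x‖^2+ε)^2), div_le_div_iff₀ (by positivity) hε]
  have h4 : |(‖x‖^2+ε) - 2*(x i)^2| ≤ 3*(‖x‖^2+ε) := by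
    rw [abs_le]
    constructor <;> nlinarith [sq_nonneg (x i), sq_nonneg ‖x‖]
  calc |(‖x‖^2+ε) - 2*(x i)^2| * ε ≤ 3*(‖x‖^2+ε) * (‖x‖^2+ε) := by
        apply mul_le_mul h4 (by nlinarith [sq_nonneg ‖x‖]) hε.le (by positivity)
    _ ≤ 3 * (‖x‖^2+ε)^2 := by nlinarith [sq_nonneg ‖x‖]

lemma cont_g {ε : ℝ} (hε : 0 < ε) (i : Fin n) :
    Continuous (fun x : E => x i / (‖x‖^2 + ε)) := by
  refine Continuous.div ?_ (by continuity) (fun x => by positivity)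
  exact (EuclideanSpace.proj (𝕜 := ℝ) i).continuous

lemma cont_dg {ε : ℝ} (hε : 0 < ε) (i : Fin n) :
    Continuous (fun x : E => ((‖x‖^2+ε) - 2*(x i)^2)/(‖x‖^2+ε)^2) := by
  have h := (EuclideanSpace.proj (𝕜 := ℝ) i).continuous
  refine Continuous.div ?_ (by continuity) (fun x => by positivity)
  continuity

lemma cont_a (f : SchwartzMap E ℂ) (i : Fin n) :
    Continuous (fun x : E => 2 * (inner ℝ (f x) (fderiv ℝ f x (EuclideanSpace.single i 1)) : ℝ)) :=
  continuous_const.mul (f.continuous.inner (pd_cont f i))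

lemma hFg_int (f : SchwartzMap E ℂ) {ε : ℝ} (hε : 0 < ε) (i : Fin n) :
    Integrable (fun x : E => ‖f x‖^2 * (x i / (‖x‖^2+ε))) :=
  int_mul_bdd (F_integrable f) (cont_g hε i).aestronglyMeasurable (fun x => bound_g hε x i)

lemma hFdg_int (f : SchwartzMap E ℂ) {ε : ℝ} (hε : 0 < ε) (i : Fin n) :
    Integrable (fun x : E => ‖f x‖^2 * (((‖x‖^2+ε) - 2*(x i)^2)/(‖x‖^2+ε)^2)) :=
  int_mul_bdd (F_integrable f) (cont_dg hε i).aestronglyMeasurable (fun x => bound_dg hε x i)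

lemma hFden_int (f : SchwartzMap E ℂ) {ε : ℝ} (hε : 0 < ε) :
    Integrable (fun x : E => ‖f x‖^2 / (‖x‖^2+ε)) := by
  have : ∀ x : E, |(‖x‖^2+ε)⁻¹| ≤ ε⁻¹ := by
    intro x
    have hd : (0:ℝ) < ‖x‖^2 + ε := by positivity
    rw [abs_of_pos (by positivity)]
    exact inv_anti₀ hε (by nlinarith [sq_nonneg ‖x‖])
  have h := int_mul_bdd (F_integrable f) (c := fun x : E => (‖x‖^2+ε)⁻¹)
    (Continuous.aestronglyMeasurable (Continuous.inv₀ (by continuity) (fun x => by positivity))) this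
  simpa [div_eq_mul_inv] using h

lemma hag_int (f : SchwartzMap E ℂ) {ε : ℝ} (hε : 0 < ε) (i : Fin n) :
    Integrable (fun x : E =>
      (2 * (inner ℝ (f x) (fderiv ℝ f x (EuclideanSpace.single i 1)) : ℝ)) * (x i / (‖x‖^2+ε))) := by
  obtain ⟨C, hC0, hC⟩ := f_bdd f
  refine Integrable.mono' ((pd_schwartz_integrable f i).const_mul (2*C*(1/(2*Real.sqrt ε))))
    ((cont_a f i).mul (cont_g hε i)).aestronglyMeasurable (Filter.Eventually.of_forall fun x => ?_)
  have h1 : |(inner ℝ (f x) (fderiv ℝ f x (EuclideanSpace.single i 1)) : ℝ)| ≤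
      ‖f x‖ * ‖fderiv ℝ f x (EuclideanSpace.single i 1)‖ := abs_real_inner_le_norm _ _
  have h2 := bound_g hε x i
  have hs : (0:ℝ) < Real.sqrt ε := Real.sqrt_pos.2 hε
  have hp : (0:ℝ) ≤ ‖fderiv ℝ f x (EuclideanSpace.single i 1)‖ := norm_nonneg _
  rw [Real.norm_eq_abs, abs_mul]
  calc |2 * (inner ℝ (f x) (fderiv ℝ f x (EuclideanSpace.single i 1)) : ℝ)| * |x i / (‖x‖^2+ε)|
      ≤ (2 * (C * ‖fderiv ℝ f x (EuclideanSpace.single i 1)‖)) * (1/(2*Real.sqrt ε)) := by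
        apply mul_le_mul _ h2 (abs_nonneg _) (by positivity)
        rw [abs_mul, abs_two]
        apply mul_le_mul_of_nonneg_left _ (by norm_num)
        exact h1.trans (mul_le_mul_of_nonneg_right (hC x) hp)
    _ = 2*C*(1/(2*Real.sqrt ε)) * ‖fderiv ℝ f x (EuclideanSpace.single i 1)‖ := by ring

lemma ibp (f : SchwartzMap E ℂ) {ε : ℝ} (hε : 0 < ε) (i : Fin n) :
    ∫ x : E, ‖f x‖^2 * (((‖x‖^2+ε) - 2*(x i)^2)/(‖x‖^2+ε)^2) =
      - ∫ x : E, (2 * (inner ℝ (f x) (fderiv ℝ f x (EuclideanSpace.single i 1)) : ℝ)) *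
        (x i / (‖x‖^2+ε)) := by
  have h1 : Integrable (fun x : E =>
      fderiv ℝ (fun y : E => ‖f y‖^2) x (EuclideanSpace.single i 1) * (x i / (‖x‖^2+ε))) := by
    simp only [F_deriv_apply]
    exact hag_int f hε i
  have h2 : Integrable (fun x : E =>
      ‖f x‖^2 * fderiv ℝ (fun y : E => y i / (‖y‖^2+ε)) x (EuclideanSpace.single i 1)) := by
    simp only [g_deriv_apply i hε]
    exact hFdg_int f hε i
  have h3 : Integrable (fun x : E => ‖f x‖^2 * (x i / (‖x‖^2+ε))) := hFg_int f hε i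
  have hdF : Differentiable ℝ (fun y : E => ‖f y‖^2) := fun x => (F_deriv f x).differentiableAt
  have hdg : Differentiable ℝ (fun y : E => y i / (‖y‖^2+ε)) :=
    fun x => (g_deriv i hε x).differentiableAt
  have key := integral_mul_fderiv_eq_neg_fderiv_mul_of_integrable (μ := volume)
    (v := EuclideanSpace.single i 1) h1 h2 h3 (fun x _ => hdF x) (fun x _ => hdg x)
  simp only [g_deriv_apply i hε, F_deriv_apply] at key
  exact key

lemma hpt1 (f : SchwartzMap E ℂ) {ε : ℝ} (hε : 0 < ε) (x : E) :
    ((n:ℝ)-2) * (‖f x‖^2/(‖x‖^2+ε)) ≤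
      ∑ i, ‖f x‖^2 * (((‖x‖^2+ε) - 2*(x i)^2)/(‖x‖^2+ε)^2) := by
  have hd : (0:ℝ) < ‖x‖^2 + ε := by positivity
  have hsum : ∑ i : Fin n, ((‖x‖^2+ε) - 2*(x i)^2) = (n:ℝ)*(‖x‖^2+ε) - 2*‖x‖^2 := by
    rw [Finset.sum_sub_distrib, Finset.sum_const, Finset.card_univ, Fintype.card_fin,
      ← Finset.mul_sum, ← normsq_eq]
    push_cast
    ring
  rw [← Finset.mul_sum, ← Finset.sum_div, hsum, ← mul_div_assoc, ← mul_div_assoc,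
    div_le_div_iff₀ hd (by positivity)]
  have hF : (0:ℝ) ≤ ‖f x‖^2 := sq_nonneg _
  nlinarith [sq_nonneg ‖x‖, mul_nonneg hF hε.le, mul_nonneg (mul_nonneg hF hε.le) hd.le]

lemma hper (f : SchwartzMap E ℂ) {ε : ℝ} (hε : 0 < ε) {t : ℝ} (ht : 0 < t) (x : E) (i : Fin n) :
    t * (-((2 * (inner ℝ (f x) (fderiv ℝ f x (EuclideanSpace.single i 1)) : ℝ)) *
        (x i / (‖x‖^2+ε)))) ≤
      t^2 * (‖f x‖^2 * (x i / (‖x‖^2+ε))^2) + ‖fderiv ℝ f x (EuclideanSpace.single i 1)‖^2 := by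
  set a : ℝ := (inner ℝ (f x) (fderiv ℝ f x (EuclideanSpace.single i 1)) : ℝ) with ha
  set c : ℝ := ‖f x‖
  set p : ℝ := ‖fderiv ℝ f x (EuclideanSpace.single i 1)‖
  set γ : ℝ := x i / (‖x‖^2+ε)
  have h1 : |a| ≤ c * p := abs_real_inner_le_norm _ _
  have h2 : -(a*γ) ≤ |a| * |γ| := by
    rw [← abs_mul]; exact neg_le_abs _
  have h3 : |a| * |γ| ≤ c * p * |γ| := mul_le_mul_of_nonneg_right h1 (abs_nonneg _)
  have hsq : t^2*c^2*γ^2 - 2*t*c*p*|γ| + p^2 ≥ 0 := by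
    rw [← sq_abs γ]
    nlinarith [sq_nonneg (t*c*|γ| - p)]
  have hsc : (t*2) * (-(a*γ)) ≤ (t*2) * (c*p*|γ|) :=
    mul_le_mul_of_nonneg_left (h2.trans h3) (by positivity)
  nlinarith [hsq, hsc]

lemma hpt2 (f : SchwartzMap E ℂ) {ε : ℝ} (hε : 0 < ε) {t : ℝ} (ht : 0 < t) (x : E) :
    t * (- ∑ i, (2 * (inner ℝ (f x) (fderiv ℝ f x (EuclideanSpace.single i 1)) : ℝ)) *
        (x i / (‖x‖^2+ε))) ≤
      t^2 * (‖f x‖^2/(‖x‖^2+ε)) + ∑ i, ‖fderiv ℝ f x (EuclideanSpace.single i 1)‖^2 := by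
  have hd : (0:ℝ) < ‖x‖^2 + ε := by positivity
  have step : t * (- ∑ i, (2 * (inner ℝ (f x) (fderiv ℝ f x (EuclideanSpace.single i 1)) : ℝ)) *
      (x i / (‖x‖^2+ε))) ≤
      ∑ i, (t^2 * (‖f x‖^2 * (x i / (‖x‖^2+ε))^2) +
        ‖fderiv ℝ f x (EuclideanSpace.single i 1)‖^2) := by
    rw [← Finset.sum_neg_distrib, Finset.mul_sum]
    exact Finset.sum_le_sum fun i _ => hper f hε ht x i
  refine step.trans ?_
  rw [Finset.sum_add_distrib]
  gcongr ?_ + _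
  have hsumsq : ∑ i : Fin n, (x i / (‖x‖^2+ε))^2 = ‖x‖^2/(‖x‖^2+ε)^2 := by
    simp_rw [div_pow, ← Finset.sum_div, ← normsq_eq]
  calc ∑ i, t^2 * (‖f x‖^2 * (x i / (‖x‖^2+ε))^2)
      = t^2 * (‖f x‖^2 * (‖x‖^2/(‖x‖^2+ε)^2)) := by
        rw [← Finset.mul_sum, ← Finset.mul_sum, hsumsq]
    _ ≤ t^2 * (‖f x‖^2/(‖x‖^2+ε)) := by
        apply mul_le_mul_of_nonneg_left _ (sq_nonneg t)
        rw [← mul_div_assoc, div_le_div_iff₀ (by positivity) hd, sq]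
        nlinarith [sq_nonneg (‖f x‖^2), sq_nonneg ‖x‖, sq_nonneg (‖f x‖*‖x‖),
          mul_nonneg (sq_nonneg (‖f x‖)) hε.le,
          mul_nonneg (mul_nonneg (sq_nonneg (‖f x‖)) hε.le) hd.le]

lemma hardy_eps (hn : 3 ≤ n) (f : SchwartzMap E ℂ) {ε : ℝ} (hε : 0 < ε) :
    ∫ x : E, ‖f x‖^2 / (‖x‖^2 + ε) ≤
      (2/((n:ℝ)-2))^2 * ∫ x : E, ∑ i, ‖fderiv ℝ f x (EuclideanSpace.single i 1)‖^2 := by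
  have hn3 : (3:ℝ) ≤ (n:ℝ) := by exact_mod_cast hn
  set m : ℝ := (n:ℝ) - 2 with hm
  have hm1 : (1:ℝ) ≤ m := by simp [hm]; linarith
  have hm0 : (0:ℝ) < m := by linarith
  set t : ℝ := m/2 with htdef
  have ht : 0 < t := by positivity
  set A : ℝ := ∫ x : E, ‖f x‖^2 / (‖x‖^2 + ε) with hA
  set B : ℝ := ∫ x : E, ∑ i, ‖fderiv ℝ f x (EuclideanSpace.single i 1)‖^2 with hB
  set S : ℝ := ∫ x : E, (- ∑ i, (2 * (inner ℝ (f x) (fderiv ℝ f x (EuclideanSpace.single i 1)) : ℝ)) *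
        (x i / (‖x‖^2+ε))) with hS
  clear_value t m A B S
  have hGint : Integrable (fun x : E => ∑ i, ‖fderiv ℝ f x (EuclideanSpace.single i 1)‖^2) :=
    integrable_finset_sum _ (fun i _ => pdsq_integrable f i)
  have hagint : Integrable (fun x : E =>
      ∑ i, (2 * (inner ℝ (f x) (fderiv ℝ f x (EuclideanSpace.single i 1)) : ℝ)) *
        (x i / (‖x‖^2+ε))) := integrable_finset_sum _ (fun i _ => hag_int f hε i)
  -- step 1: (m) * A ≤ ∫ ∑ F * dg
  have step1 : m * A ≤ ∫ x : E, ∑ i, ‖f x‖^2 * (((‖x‖^2+ε) - 2*(x i)^2)/(‖x‖^2+ε)^2) := by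
    rw [hA, ← integral_const_mul]
    refine integral_mono ((hFden_int f hε).const_mul m) (integrable_finset_sum _
      (fun i _ => hFdg_int f hε i)) (fun x => ?_)
    simpa [hm] using hpt1 f hε x
  -- step 2
  have step2 : ∫ x : E, ∑ i, ‖f x‖^2 * (((‖x‖^2+ε) - 2*(x i)^2)/(‖x‖^2+ε)^2) = S := by
    rw [integral_finset_sum _ (fun i _ => hFdg_int f hε i)]
    rw [hS, integral_neg, integral_finset_sum _ (fun i _ => hag_int f hε i),
      ← Finset.sum_neg_distrib]
    exact Finset.sum_congr rfl (fun i _ => ibp f hε i)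
  -- step 3
  have step3 : t * S ≤ t^2 * A + B := by
    rw [hS, ← integral_const_mul, hA, hB, ← integral_const_mul]
    rw [← integral_add (((hFden_int f hε).const_mul (t^2))) hGint]
    refine integral_mono ?_ ((((hFden_int f hε).const_mul (t^2))).add hGint) (fun x => ?_)
    · exact (hagint.neg).const_mul t
    · exact hpt2 f hε ht x
  have key : m * A ≤ S := by rw [← step2]; exact step1
  have key2 : t * (m * A) ≤ t^2 * A + B :=
    le_trans (mul_le_mul_of_nonneg_left key ht.le) step3
  have hmA : m^2 * A ≤ 4 * B := by
    rw [htdef] at key2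
    nlinarith [key2]
  rw [div_pow, div_mul_eq_mul_div, le_div_iff₀ (by positivity : (0:ℝ) < m^2)]
  nlinarith [hmA]

lemma hardy_final (hn : 3 ≤ n) (f : SchwartzMap E ℂ) :
    ∫ x : E, ‖f x‖ ^ 2 / ‖x‖ ^ 2 ≤
      (2 / ((n : ℝ) - 2)) ^ 2 *
        ∫ x : E, ∑ i, ‖fderiv ℝ f x (EuclideanSpace.single i 1)‖ ^ 2 := by
  have hnt : Nontrivial E := by
    refine ⟨EuclideanSpace.single ⟨0, by omega⟩ 1, 0, fun h => ?_⟩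
    have := congrArg (fun v : E => v ⟨0, by omega⟩) h
    simp at this
  set B : ℝ := ∫ x : E, ∑ i, ‖fderiv ℝ f x (EuclideanSpace.single i 1)‖ ^ 2 with hB
  have hB0 : 0 ≤ B :=
    integral_nonneg (fun x => Finset.sum_nonneg fun i _ => sq_nonneg _)
  set C : ℝ := (2 / ((n:ℝ) - 2)) ^ 2 * B with hC
  have hC0 : 0 ≤ C := mul_nonneg (sq_nonneg _) hB0
  have hmeas : AEStronglyMeasurable (fun x : E => ‖f x‖^2/‖x‖^2) volume :=
    (((f.continuous.norm.pow 2).measurable).div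
      ((continuous_norm.pow 2).measurable)).aestronglyMeasurable
  rw [integral_eq_lintegral_of_nonneg_ae
    (Filter.Eventually.of_forall (fun x => by positivity)) hmeas]
  refine ENNReal.toReal_le_of_le_ofReal hC0 ?_
  set φ : ℕ → E → ENNReal :=
    fun k x => ENNReal.ofReal (‖f x‖^2/(‖x‖^2 + 1/((k:ℝ)+1))) with hφ
  have hεpos : ∀ k : ℕ, (0:ℝ) < 1/((k:ℝ)+1) := fun k => by positivity
  have hφmeas : ∀ k, Measurable (φ k) := by
    intro k
    apply ENNReal.measurable_ofReal.comp
    exact ((f.continuous.norm.pow 2).div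
      (by continuity) (fun x => by positivity)).measurable
  have hφmono : Monotone φ := by
    intro k l hkl x
    apply ENNReal.ofReal_le_ofReal
    apply div_le_div_of_nonneg_left (sq_nonneg _) (by positivity)
    have : 1/((l:ℝ)+1) ≤ 1/((k:ℝ)+1) := by
      apply div_le_div_of_nonneg_left one_pos.le (by positivity)
      exact_mod_cast by omega
    linarith
  have hptle : ∀ᵐ x : E ∂volume, ENNReal.ofReal (‖f x‖^2/‖x‖^2) ≤ ⨆ k, φ k x := by
    have h0 : ∀ᵐ x : E ∂volume, x ≠ 0 := by
      rw [ae_iff]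
      have : {x : E | ¬ x ≠ 0} = {0} := by ext x; simp
      rw [this]
      exact measure_singleton 0
    filter_upwards [h0] with x hx
    have hq : (0:ℝ) < ‖x‖^2 := by
      have : ‖x‖ ≠ 0 := fun h => hx (norm_eq_zero.1 h)
      positivity
    have tend : Filter.Tendsto (fun k : ℕ => ‖f x‖^2/(‖x‖^2 + 1/((k:ℝ)+1)))
        Filter.atTop (nhds (‖f x‖^2/‖x‖^2)) := by
      have hd : Filter.Tendsto (fun k : ℕ => ‖x‖^2 + 1/((k:ℝ)+1))
          Filter.atTop (nhds (‖x‖^2)) := by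
        have : Filter.Tendsto (fun k : ℕ => 1/((k:ℝ)+1)) Filter.atTop (nhds 0) :=
          tendsto_one_div_add_atTop_nhds_zero_nat
        simpa using (tendsto_const_nhds (x := ‖x‖^2)).add this
      exact Filter.Tendsto.div tendsto_const_nhds hd hq.ne'
    have tendo : Filter.Tendsto (fun k : ℕ => φ k x) Filter.atTop
        (nhds (ENNReal.ofReal (‖f x‖^2/‖x‖^2))) :=
      (ENNReal.continuous_ofReal.tendsto _).comp tend
    exact le_of_tendsto' tendo (fun k => le_iSup (fun k => φ k x) k)
  calc ∫⁻ x : E, ENNReal.ofReal (‖f x‖^2/‖x‖^2)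
      ≤ ∫⁻ x : E, ⨆ k, φ k x := lintegral_mono_ae hptle
    _ = ⨆ k, ∫⁻ x : E, φ k x := lintegral_iSup hφmeas hφmono
    _ ≤ ENNReal.ofReal C := by
        refine iSup_le fun k => ?_
        have heq : ∫⁻ x : E, φ k x =
            ENNReal.ofReal (∫ x : E, ‖f x‖^2/(‖x‖^2 + 1/((k:ℝ)+1))) :=
          (ofReal_integral_eq_lintegral_ofReal (hFden_int f (hεpos k))
            (Filter.Eventually.of_forall (fun x => by positivity))).symm
        rw [heq]
        exact ENNReal.ofReal_le_ofReal (hardy_eps hn f (hεpos k))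

end HardyAux

/-- Hardy's inequality on `ℝⁿ`, `n ≥ 3`:
`∫ |f(x)|²/‖x‖² dx ≤ (2/(n−2))² ∫ ‖∇f(x)‖² dx` for Schwartz `f`. -/
theorem hardy_inequality {n : ℕ} (hn : 3 ≤ n)
    (f : SchwartzMap (EuclideanSpace ℝ (Fin n)) ℂ) :
    ∫ x : EuclideanSpace ℝ (Fin n), ‖f x‖ ^ 2 / ‖x‖ ^ 2 ≤
      (2 / ((n : ℝ) - 2)) ^ 2 *
        ∫ x : EuclideanSpace ℝ (Fin n), ∑ i, ‖pd f i x‖ ^ 2 := by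
  exact HardyAux.hardy_final hn f

end
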